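/- Fix an index α. Let h, g be smooth on Ω with ∂_i g = λ^i ∂_i h for all i, and assume h, ∂_α h, ∂_α g and ∂_α h − a_{iα} h (for every i ≠ α) are nonvanishing on Ω. Define Λ^α = g/h and Λ^i = (λ^i ∂_α h − a_{iα} g)/(∂_α h − a_{iα} h) for i ≠ α. Then for every pair of smooth functions u, f on Ω with ∂_i f = λ^i ∂_i u for all i, the Lévy transforms U = u − (h/∂_α h)·∂_α u and F = f − (g/∂_α g)·∂_α f satisfy ∂_i F = Λ^i ∂_i U for all i = 1,…,n. -/

import Mathlib

/-- Partial derivative with respect to the `i`-th coordinate. -/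
noncomputable def pd {n : ℕ} {F : Type*} [NormedAddCommGroup F] [NormedSpace ℝ F]
    (i : Fin n) (w : (Fin n → ℝ) → F) : (Fin n → ℝ) → F :=
  fun p => fderiv ℝ w p (Pi.single i 1)

open Filter Topology

variable {n : ℕ}

lemma pd_congr {a b : (Fin n → ℝ) → ℝ} {p : Fin n → ℝ} (i : Fin n)
    (hab : a =ᶠ[nhds p] b) : pd i a p = pd i b p := by
  simp only [pd, hab.fderiv_eq]

lemma pd_sub {a b : (Fin n → ℝ) → ℝ} {p : Fin n → ℝ} (i : Fin n)
    (ha : DifferentiableAt ℝ a p) (hb : DifferentiableAt ℝ b p) :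
    pd i (fun x => a x - b x) p = pd i a p - pd i b p := by
  simp only [pd, fderiv_fun_sub ha hb, ContinuousLinearMap.sub_apply]

lemma pd_mul {a b : (Fin n → ℝ) → ℝ} {p : Fin n → ℝ} (i : Fin n)
    (ha : DifferentiableAt ℝ a p) (hb : DifferentiableAt ℝ b p) :
    pd i (fun x => a x * b x) p = pd i a p * b p + a p * pd i b p := by
  simp only [pd, fderiv_fun_mul ha hb, ContinuousLinearMap.add_apply,
    ContinuousLinearMap.smul_apply, smul_eq_mul]
  ring

lemma pd_inv {a : (Fin n → ℝ) → ℝ} {p : Fin n → ℝ} (i : Fin n)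
    (ha : DifferentiableAt ℝ a p) (h0 : a p ≠ 0) :
    pd i (fun x => (a x)⁻¹) p = -pd i a p / (a p) ^ 2 := by
  have h1 : HasFDerivAt (fun x => (a x)⁻¹)
      ((-ContinuousLinearMap.mulLeftRight ℝ ℝ (a p)⁻¹ (a p)⁻¹).comp (fderiv ℝ a p)) p :=
    (hasFDerivAt_inv' h0).comp p ha.hasFDerivAt
  simp only [pd, h1.fderiv, ContinuousLinearMap.comp_apply,
    ContinuousLinearMap.neg_apply, ContinuousLinearMap.mulLeftRight_apply]
  rw [pow_two, neg_div, div_eq_mul_inv, mul_inv]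
  ring

lemma pd_div {a b : (Fin n → ℝ) → ℝ} {p : Fin n → ℝ} (i : Fin n)
    (ha : DifferentiableAt ℝ a p) (hb : DifferentiableAt ℝ b p) (h0 : b p ≠ 0) :
    pd i (fun x => a x / b x) p = (pd i a p * b p - a p * pd i b p) / (b p) ^ 2 := by
  have : (fun x => a x / b x) = fun x => a x * (b x)⁻¹ := by
    funext x; rw [div_eq_mul_inv]
  rw [this, pd_mul i ha (hb.fun_inv h0), pd_inv i hb h0]
  field_simp
  ring

lemma contDiffOn_pd {w : (Fin n → ℝ) → ℝ} {Ω : Set (Fin n → ℝ)} (hΩ : IsOpen Ω)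
    (hw : ContDiffOn ℝ (⊤ : ℕ∞) w Ω) (i : Fin n) :
    ContDiffOn ℝ (⊤ : ℕ∞) (pd i w) Ω := by
  have h1 : ContDiffOn ℝ (⊤ : ℕ∞) (fderiv ℝ w) Ω :=
    hw.fderiv_of_isOpen hΩ (by exact_mod_cast le_top)
  exact (ContinuousLinearMap.apply ℝ ℝ (Pi.single i 1)).contDiff.comp_contDiffOn h1

lemma diffAt_of_smooth {w : (Fin n → ℝ) → ℝ} {Ω : Set (Fin n → ℝ)} (hΩ : IsOpen Ω)
    (hw : ContDiffOn ℝ (⊤ : ℕ∞) w Ω) {p : Fin n → ℝ} (hp : p ∈ Ω) :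
    DifferentiableAt ℝ w p :=
  (hw.contDiffAt (hΩ.mem_nhds hp)).differentiableAt (by simp)

lemma pd_symm {w : (Fin n → ℝ) → ℝ} {Ω : Set (Fin n → ℝ)} (hΩ : IsOpen Ω)
    (hw : ContDiffOn ℝ (⊤ : ℕ∞) w Ω) {p : Fin n → ℝ} (hp : p ∈ Ω) (i j : Fin n) :
    pd i (pd j w) p = pd j (pd i w) p := by
  have hmem := hΩ.mem_nhds hp
  have hca : ContDiffAt ℝ (⊤ : ℕ∞) w p := hw.contDiffAt hmem
  have hsym : IsSymmSndFDerivAt ℝ w p := hca.isSymmSndFDerivAt (by rw [minSmoothness_of_isRCLikeNormedField]; exact_mod_cast ENat.natCast_le_of_coe_top_le_withTop le_rfl 2)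
  have hdf : DifferentiableAt ℝ (fderiv ℝ w) p :=
    ((hw.fderiv_of_isOpen hΩ (m := (⊤:ℕ∞))
      (by exact_mod_cast (le_refl (⊤:ℕ∞)))).contDiffAt hmem).differentiableAt
      (by simp)
  have ev : ∀ a b : Fin n, pd a (pd b w) p
      = fderiv ℝ (fderiv ℝ w) p (Pi.single a 1) (Pi.single b 1) := by
    intro a b
    have h2 := fderiv_clm_apply (𝕜 := ℝ) hdf
      (differentiableAt_const (Pi.single b 1 : Fin n → ℝ))
    show fderiv ℝ (fun q => fderiv ℝ w q (Pi.single b 1)) p (Pi.single a 1) = _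
    rw [h2]
    simp
  rw [ev, ev]
  exact hsym _ _

set_option maxHeartbeats 2000000 in
/-- the Lévy transforms `U = u − (h/∂_α h)∂_α u`, `F = f − (g/∂_α g)∂_α f`
of a conservation law `(u, f)` satisfy `∂_i F = Λ^i ∂_i U` where `Λ` are the
Lévy-transformed characteristic velocities (24); here `a_{iα} = ∂_α λ^i/(λ^α − λ^i)`. -/
theorem stmt9 {n : ℕ} (Ω : Set (Fin n → ℝ)) (hΩ : IsOpen Ω) (α : Fin n)
    (lam : Fin n → (Fin n → ℝ) → ℝ)
    (hlam : ∀ i, ContDiffOn ℝ (⊤ : ℕ∞) (lam i) Ω)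
    (hdist : ∀ i j, i ≠ j → ∀ p ∈ Ω, lam i p ≠ lam j p)
    (h g : (Fin n → ℝ) → ℝ)
    (hhsm : ContDiffOn ℝ (⊤ : ℕ∞) h Ω) (hgsm : ContDiffOn ℝ (⊤ : ℕ∞) g Ω)
    (hcl : ∀ i, ∀ p ∈ Ω, pd i g p = lam i p * pd i h p)
    (hh0 : ∀ p ∈ Ω, h p ≠ 0)
    (hdh0 : ∀ p ∈ Ω, pd α h p ≠ 0)
    (hdg0 : ∀ p ∈ Ω, pd α g p ≠ 0)
    (hden : ∀ i, i ≠ α → ∀ p ∈ Ω,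
      pd α h p - (pd α (lam i) p / (lam α p - lam i p)) * h p ≠ 0)
    (Lam : Fin n → (Fin n → ℝ) → ℝ)
    (hLamα : ∀ p, Lam α p = g p / h p)
    (hLami : ∀ i, i ≠ α → ∀ p, Lam i p =
      (lam i p * pd α h p - (pd α (lam i) p / (lam α p - lam i p)) * g p)
        / (pd α h p - (pd α (lam i) p / (lam α p - lam i p)) * h p)) :
    ∀ u f : (Fin n → ℝ) → ℝ,
      ContDiffOn ℝ (⊤ : ℕ∞) u Ω → ContDiffOn ℝ (⊤ : ℕ∞) f Ω →
      (∀ i, ∀ p ∈ Ω, pd i f p = lam i p * pd i u p) →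
      ∀ i, ∀ p ∈ Ω,
        pd i (fun x => f x - (g x / pd α g x) * pd α f x) p
          = Lam i p * pd i (fun x => u x - (h x / pd α h x) * pd α u x) p := by
  intro u f husm hfsm hclu i p hp
  have hmem : Ω ∈ nhds p := hΩ.mem_nhds hp
  have dh := diffAt_of_smooth hΩ hhsm hp
  have dg := diffAt_of_smooth hΩ hgsm hp
  have du := diffAt_of_smooth hΩ husm hp
  have df := diffAt_of_smooth hΩ hfsm hp
  have dpαh := diffAt_of_smooth hΩ (contDiffOn_pd hΩ hhsm α) hp
  have dpαg := diffAt_of_smooth hΩ (contDiffOn_pd hΩ hgsm α) hp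
  have dpαu := diffAt_of_smooth hΩ (contDiffOn_pd hΩ husm α) hp
  have dpαf := diffAt_of_smooth hΩ (contDiffOn_pd hΩ hfsm α) hp
  have hgα0 : pd α g p ≠ 0 := hdg0 p hp
  have ddivg : DifferentiableAt ℝ (fun x => g x / pd α g x) p := by
    simp only [div_eq_mul_inv]
    exact dg.mul (dpαg.inv hgα0)
  have hhα0 : pd α h p ≠ 0 := hdh0 p hp
  have ddivh : DifferentiableAt ℝ (fun x => h x / pd α h x) p := by
    simp only [div_eq_mul_inv]
    exact dh.mul (dpαh.inv hhα0)
  have hhp0 : h p ≠ 0 := hh0 p hp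
  -- derivative of the conservation-law identity
  have key : ∀ (w v : (Fin n → ℝ) → ℝ), ContDiffOn ℝ (⊤ : ℕ∞) w Ω →
      ∀ j k : Fin n, (∀ q ∈ Ω, pd j v q = lam j q * pd j w q) →
      pd k (pd j v) p = pd k (lam j) p * pd j w p + lam j p * pd k (pd j w) p := by
    intro w v hwsm j k hrel
    have e1 : pd j v =ᶠ[nhds p] fun q => lam j q * pd j w q :=
      Filter.eventuallyEq_of_mem hmem hrel
    rw [pd_congr k e1, pd_mul k (diffAt_of_smooth hΩ (hlam j) hp)
      (diffAt_of_smooth hΩ (contDiffOn_pd hΩ hwsm j) hp)]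
  have Gi := key h g hhsm α i (fun q hq => hcl α q hq)
  have Fi := key u f husm α i (fun q hq => hclu α q hq)
  have LHSexp : pd i (fun x => f x - (g x / pd α g x) * pd α f x) p
      = pd i f p - ((pd i g p * pd α g p - g p * pd i (pd α g) p) / (pd α g p) ^ 2 * pd α f p
          + g p / pd α g p * pd i (pd α f) p) := by
    rw [pd_sub i df ((ddivg).fun_mul dpαf), pd_mul i (ddivg) dpαf,
      pd_div i dg dpαg hgα0]
  have RHSexp : pd i (fun x => u x - (h x / pd α h x) * pd α u x) p
      = pd i u p - ((pd i h p * pd α h p - h p * pd i (pd α h) p) / (pd α h p) ^ 2 * pd α u p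
          + h p / pd α h p * pd i (pd α u) p) := by
    rw [pd_sub i du ((ddivh).fun_mul dpαu), pd_mul i (ddivh) dpαu,
      pd_div i dh dpαh hhα0]
  have hαq : pd α g p = lam α p * pd α h p := hcl α p hp
  have fαq : pd α f p = lam α p * pd α u p := hclu α p hp
  have hla0 : lam α p ≠ 0 := fun e => hgα0 (by rw [hαq, e, zero_mul])
  by_cases hiα : i = α
  · subst hiα
    rw [LHSexp, RHSexp, hLamα, Gi, Fi, hαq, fαq]
    field_simp
    ring
  · have hiq : pd i g p = lam i p * pd i h p := hcl i p hp
    have fiq : pd i f p = lam i p * pd i u p := hclu i p hp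
    have symg : pd i (pd α g) p = pd α (pd i g) p := pd_symm hΩ hgsm hp i α
    have symh : pd i (pd α h) p = pd α (pd i h) p := pd_symm hΩ hhsm hp i α
    have symf : pd i (pd α f) p = pd α (pd i f) p := pd_symm hΩ hfsm hp i α
    have symu : pd i (pd α u) p = pd α (pd i u) p := pd_symm hΩ husm hp i α
    have Gi2 := key h g hhsm i α (fun q hq => hcl i q hq)
    have Fi2 := key u f husm i α (fun q hq => hclu i q hq)
    have hne : lam α p - lam i p ≠ 0 :=
      sub_ne_zero.mpr (hdist α i (Ne.symm hiα) p hp)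
    have hHi : pd i (pd α h) p
        = (pd α (lam i) p * pd i h p - pd i (lam α) p * pd α h p) / (lam α p - lam i p) := by
      have e : pd i (lam α) p * pd α h p + lam α p * pd i (pd α h) p
          = pd α (lam i) p * pd i h p + lam i p * pd i (pd α h) p := by
        rw [← Gi, symg, Gi2, ← symh]
      field_simp
      linear_combination e
    have hUi : pd i (pd α u) p
        = (pd α (lam i) p * pd i u p - pd i (lam α) p * pd α u p) / (lam α p - lam i p) := by
      have e : pd i (lam α) p * pd α u p + lam α p * pd i (pd α u) p
          = pd α (lam i) p * pd i u p + lam i p * pd i (pd α u) p := by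
        rw [← Fi, symf, Fi2, ← symu]
      field_simp
      linear_combination e
    have hdeno := hden i hiα p hp
    have hdeno' : pd α h p * (lam α p - lam i p) - pd α (lam i) p * h p ≠ 0 := by
      have e2 : pd α h p - pd α (lam i) p / (lam α p - lam i p) * h p
          = (pd α h p * (lam α p - lam i p) - pd α (lam i) p * h p) / (lam α p - lam i p) := by
        field_simp
      rw [e2] at hdeno
      exact fun e => hdeno (by rw [e, zero_div])
    have hLam' : Lam i p
        = (lam i p * pd α h p * (lam α p - lam i p) - pd α (lam i) p * g p)
          / (pd α h p * (lam α p - lam i p) - pd α (lam i) p * h p) := by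
      rw [hLami i hiα, div_eq_div_iff hdeno hdeno']
      field_simp
    rw [LHSexp, RHSexp, hLam', Gi, Fi, hHi, hUi, hαq, fαq, hiq, fiq]
    field_simp
    ring
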